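/- Combining the block and majority lemmas: let x₁,…,x_n be i.i.d. ℝ^d-valued with mean μ and covariance Σ, δ ∈ (0,1), and b = 1 + ⌊3.5 log(1/δ)⌋ with b ≤ n. Partition the samples into b blocks of size ⌊n/b⌋, let μ̂ᵢ be the block sample means, and let μ̂_GMOM be their geometric median. Then with probability at least 1 − δ, ‖μ̂_GMOM − μ‖₂ ≤ C·sqrt(trace(Σ)·(1 + log(1/δ))/n) for a universal constant C. -/

import Mathlib

open MeasureTheory ProbabilityTheory
open scoped Classical


lemma blk_card (n m b i : ℕ) (hm : 0 < m) (hib : i < b) (hbm : b * m ≤ n) :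
    (Finset.univ.filter fun k : Fin n => k.val / m = i).card = m := by
  have h1 : (i+1) * m ≤ n := le_trans (Nat.mul_le_mul_right m hib) hbm
  have hsm : (i+1)*m = i*m+m := by ring
  have : (Finset.univ.filter fun k : Fin n => k.val / m = i).card
      = (Finset.Ico (i*m) (i*m+m)).card := by
    apply Finset.card_bij (fun k _ => k.val)
    · intro k hk
      simp only [Finset.mem_filter] at hk
      have hk2 := hk.2
      rw [Finset.mem_Ico]
      constructor
      · calc i*m = (k.val/m)*m := by rw [hk2]
          _ ≤ k.val := Nat.div_mul_le_self _ _
      · have h3 : k.val / m < i + 1 := by omega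
        have := (Nat.div_lt_iff_lt_mul hm).mp h3
        omega
    · intro a _ b _ h; exact Fin.ext h
    · intro j hj
      rw [Finset.mem_Ico] at hj
      have hjn : j < n := by omega
      refine ⟨⟨j, hjn⟩, ?_, rfl⟩
      simp only [Finset.mem_filter, Finset.mem_univ, true_and]
      apply Nat.div_eq_of_lt_le
      · omega
      · omega
  rw [this, Nat.card_Ico]; omega

lemma gm_lemma {E : Type*} [NormedAddCommGroup E] {b : ℕ} (hb : 0 < b)
    (y : Fin b → E) (z μ : E) (r : ℝ) (hr : 0 ≤ r)
    (hmed : ∑ i, ‖z - y i‖ ≤ ∑ i, ‖μ - y i‖)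
    (hF : 4 * (Finset.univ.filter fun i => r < ‖y i - μ‖).card ≤ b) :
    ‖z - μ‖ ≤ 4 * r := by
  classical
  set Fs := Finset.univ.filter fun i : Fin b => r < ‖y i - μ‖ with hFs
  set Gs := Finset.univ.filter fun i : Fin b => ¬ (r < ‖y i - μ‖) with hGs
  have hcard : Gs.card + Fs.card = b := by
    rw [hGs, hFs]
    have := Finset.card_filter_add_card_filter_not (s := (Finset.univ : Finset (Fin b))) (p := fun i : Fin b => r < ‖y i - μ‖)
    simp only [Finset.card_univ, Fintype.card_fin] at this
    omega
  have hsplit : ∀ f : Fin b → ℝ, ∑ i, f i = ∑ i ∈ Gs, f i + ∑ i ∈ Fs, f i := by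
    intro f
    rw [hGs, hFs, ← Finset.sum_filter_add_sum_filter_not Finset.univ
      (fun i : Fin b => ¬ (r < ‖y i - μ‖))]
    simp
  -- lower bound on LHS
  have h1 : ∀ i ∈ Gs, ‖z - μ‖ - r ≤ ‖z - y i‖ := by
    intro i hi
    simp only [hGs, Finset.mem_filter, not_lt] at hi
    have : ‖z - μ‖ ≤ ‖z - y i‖ + ‖y i - μ‖ := norm_sub_le_norm_sub_add_norm_sub z (y i) μ
    linarith [hi.2]
  have h2 : ∀ i ∈ Fs, ‖μ - y i‖ - ‖z - μ‖ ≤ ‖z - y i‖ := by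
    intro i _
    have : ‖μ - y i‖ ≤ ‖μ - z‖ + ‖z - y i‖ := norm_sub_le_norm_sub_add_norm_sub μ z (y i)
    rw [norm_sub_rev μ z] at this
    linarith
  have h3 : ∀ i ∈ Gs, ‖μ - y i‖ ≤ r := by
    intro i hi
    simp only [hGs, Finset.mem_filter, not_lt] at hi
    rw [norm_sub_rev]; exact hi.2
  have key : (Gs.card : ℝ) * (‖z - μ‖ - r) + (∑ i ∈ Fs, ‖μ - y i‖ - Fs.card * ‖z - μ‖)
      ≤ Gs.card * r + ∑ i ∈ Fs, ‖μ - y i‖ := by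
    calc (Gs.card : ℝ) * (‖z - μ‖ - r) + (∑ i ∈ Fs, ‖μ - y i‖ - Fs.card * ‖z - μ‖)
        = ∑ i ∈ Gs, (‖z - μ‖ - r) + ∑ i ∈ Fs, (‖μ - y i‖ - ‖z - μ‖) := by
          rw [Finset.sum_const, Finset.sum_sub_distrib, Finset.sum_const, nsmul_eq_mul, nsmul_eq_mul]
          try ring
      _ ≤ ∑ i ∈ Gs, ‖z - y i‖ + ∑ i ∈ Fs, ‖z - y i‖ :=
          add_le_add (Finset.sum_le_sum h1) (Finset.sum_le_sum h2)
      _ = ∑ i, ‖z - y i‖ := (hsplit _).symm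
      _ ≤ ∑ i, ‖μ - y i‖ := hmed
      _ = ∑ i ∈ Gs, ‖μ - y i‖ + ∑ i ∈ Fs, ‖μ - y i‖ := hsplit _
      _ ≤ Gs.card * r + ∑ i ∈ Fs, ‖μ - y i‖ := by
          gcongr
          · calc ∑ i ∈ Gs, ‖μ - y i‖ ≤ ∑ _i ∈ Gs, r := Finset.sum_le_sum h3
              _ = Gs.card * r := by rw [Finset.sum_const, nsmul_eq_mul]
  -- conclude
  have hGF : (Gs.card : ℝ) - Fs.card ≥ (b : ℝ) / 2 := by
    have : (Gs.card : ℝ) = (b : ℝ) - Fs.card := by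
      have := hcard; push_cast [← this]; ring
    rw [this]
    have : (4 * Fs.card : ℝ) ≤ b := by exact_mod_cast hF
    linarith
  have hb' : (0:ℝ) < (b:ℝ)/2 := by positivity
  have hkey2 : ((Gs.card : ℝ) - Fs.card) * ‖z - μ‖ ≤ 2 * Gs.card * r := by nlinarith
  have hGb : (Gs.card : ℝ) ≤ b := by
    have : Gs.card ≤ b := by omega
    exact_mod_cast this
  nlinarith [norm_nonneg (z - μ), hGF, hb']

section moment
variable {Ω : Type} [MeasurableSpace Ω] {P : Measure Ω} [IsProbabilityMeasure P]
variable {d n b : ℕ}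

local notation "E" => EuclideanSpace ℝ (Fin d)

lemma sum_sq_moment (x : Fin n → Ω → E) (hmeas : ∀ i, Measurable (x i))
    (hindep : iIndepFun x P)
    (μ : E) (hint : ∀ i, Integrable (x i) P) (hmean : ∀ i, ∫ ω, x i ω ∂P = μ)
    (t : ℝ) (hsq : ∀ i, Integrable (fun ω => ‖x i ω - μ‖ ^ 2) P)
    (hvar : ∀ i, ∫ ω, ‖x i ω - μ‖ ^ 2 ∂P = t) (B : Finset (Fin n)) :
    Integrable (fun ω => ‖∑ k ∈ B, (x k ω - μ)‖ ^ 2) P ∧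
    ∫ ω, ‖∑ k ∈ B, (x k ω - μ)‖ ^ 2 ∂P = B.card * t := by
  classical
  set Z : Fin n → Ω → E := fun k ω => x k ω - μ with hZ
  have hZint : ∀ k, Integrable (Z k) P := fun k => (hint k).sub (integrable_const μ)
  have hZmean : ∀ k, ∫ ω, Z k ω ∂P = 0 := by
    intro k
    rw [integral_sub (hint k) (integrable_const μ), hmean k, integral_const]
    simp
  -- coordinates
  have hZc_int : ∀ k c, Integrable (fun ω => Z k ω c) P := by
    intro k c
    exact ((EuclideanSpace.proj c : E →L[ℝ] ℝ).integrable_comp (hZint k))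
  have hZc_mean : ∀ k c, ∫ ω, Z k ω c ∂P = 0 := by
    intro k c
    have := ((EuclideanSpace.proj c : E →L[ℝ] ℝ).integral_comp_comm (hZint k))
    simpa [hZmean k] using this
  -- independence of coordinates for j ≠ k
  have hZZ_indep : ∀ j k, j ≠ k → ∀ c, IndepFun (fun ω => Z j ω c) (fun ω => Z k ω c) P := by
    intro j k hjk c
    have h1 : IndepFun (x j) (x k) P := hindep.indepFun hjk
    have hm : Measurable (fun v : E => v c - μ c) :=
      ((EuclideanSpace.proj c : E →L[ℝ] ℝ).measurable).sub measurable_const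
    exact h1.comp hm hm
  -- cross term integrable and integral
  have hcross_int : ∀ j k, Integrable (fun ω => (inner ℝ (Z j ω) (Z k ω) : ℝ)) P := by
    intro j k
    by_cases hjk : j = k
    · subst hjk
      have : (fun ω => (inner ℝ (Z j ω) (Z j ω) : ℝ)) = fun ω => ‖Z j ω‖ ^ 2 := by
        funext ω; rw [real_inner_self_eq_norm_sq]
      rw [this]; exact hsq j
    · have : (fun ω => (inner ℝ (Z j ω) (Z k ω) : ℝ))
          = fun ω => ∑ c, (Z j ω c) * (Z k ω c) := by
        funext ω
        simp [PiLp.inner_apply, RCLike.inner_apply, conj_trivial]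
        exact Finset.sum_congr rfl fun _ _ => mul_comm _ _
      rw [this]
      apply integrable_finset_sum
      intro c _
      exact (hZZ_indep j k hjk c).integrable_mul (hZc_int j c) (hZc_int k c)
  have hcross_val : ∀ j k, j ≠ k → ∫ ω, (inner ℝ (Z j ω) (Z k ω) : ℝ) ∂P = 0 := by
    intro j k hjk
    have h1 : (fun ω => (inner ℝ (Z j ω) (Z k ω) : ℝ))
        = fun ω => ∑ c, (Z j ω c) * (Z k ω c) := by
      funext ω
      simp [PiLp.inner_apply, RCLike.inner_apply, conj_trivial]
      exact Finset.sum_congr rfl fun _ _ => mul_comm _ _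
    rw [h1, integral_finset_sum]
    · apply Finset.sum_eq_zero
      intro c _
      have := (hZZ_indep j k hjk c).integral_fun_mul_eq_mul_integral
        (hZc_int j c).aestronglyMeasurable (hZc_int k c).aestronglyMeasurable
      have h2 : ∫ ω, (Z j ω c) * (Z k ω c) ∂P = (∫ ω, Z j ω c ∂P) * ∫ ω, Z k ω c ∂P := this
      rw [h2, hZc_mean, hZc_mean, mul_zero]
    · intro c _
      exact (hZZ_indep j k hjk c).integrable_mul (hZc_int j c) (hZc_int k c)
  -- expansion
  have hexp : ∀ ω, ‖∑ k ∈ B, Z k ω‖ ^ 2 = ∑ j ∈ B, ∑ k ∈ B, (inner ℝ (Z j ω) (Z k ω) : ℝ) := by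
    intro ω
    rw [← real_inner_self_eq_norm_sq, sum_inner]
    congr 1
    funext j
    exact inner_sum B (fun k => Z k ω) (Z j ω)
  constructor
  · have : (fun ω => ‖∑ k ∈ B, Z k ω‖ ^ 2)
        = fun ω => ∑ j ∈ B, ∑ k ∈ B, (inner ℝ (Z j ω) (Z k ω) : ℝ) := funext hexp
    rw [this]
    exact integrable_finset_sum _ fun j _ => integrable_finset_sum _ fun k _ => hcross_int j k
  · have : (fun ω => ‖∑ k ∈ B, Z k ω‖ ^ 2)
        = fun ω => ∑ j ∈ B, ∑ k ∈ B, (inner ℝ (Z j ω) (Z k ω) : ℝ) := funext hexp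
    rw [this, integral_finset_sum _ fun j _ => integrable_finset_sum _ fun k _ => hcross_int j k]
    have : ∀ j ∈ B, ∫ ω, ∑ k ∈ B, (inner ℝ (Z j ω) (Z k ω) : ℝ) ∂P = t := by
      intro j hj
      rw [integral_finset_sum _ fun k _ => hcross_int j k]
      rw [Finset.sum_eq_single j]
      · have : (fun ω => (inner ℝ (Z j ω) (Z j ω) : ℝ)) = fun ω => ‖Z j ω‖ ^ 2 := by
          funext ω; rw [real_inner_self_eq_norm_sq]
        rw [this]; exact hvar j
      · intro k _ hkj; exact hcross_val j k (Ne.symm hkj)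
      · intro h; exact absurd hj h
    rw [Finset.sum_congr rfl this, Finset.sum_const, nsmul_eq_mul]

lemma indep_blocks_inter (x : Fin n → Ω → E) (hmeas : ∀ i, Measurable (x i))
    (hindep : iIndepFun x P)
    (Blk : Fin b → Finset (Fin n))
    (hdisj : ∀ i j, i ≠ j → Disjoint (Blk i) (Blk j))
    (C : ∀ i : Fin b, Set ({k // k ∈ Blk i} → E))
    (hC : ∀ i, MeasurableSet (C i))
    (A : Fin b → Set Ω)
    (hA : ∀ i, A i = (fun ω (k : {k // k ∈ Blk i}) => x k ω) ⁻¹' (C i)) :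
    ∀ S : Finset (Fin b), P (⋂ i ∈ S, A i) = ∏ i ∈ S, P (A i) := by
  classical
  intro S
  induction S using Finset.cons_induction with
  | empty => simp
  | cons a S' ha ih =>
    set T : Finset (Fin n) := S'.biUnion Blk with hT
    have hdisjT : Disjoint (Blk a) T := by
      rw [hT, Finset.disjoint_biUnion_right]
      intro i hi
      exact hdisj a i (fun h => ha (h ▸ hi))
    have hIF := hindep.indepFun_finset (Blk a) T hdisjT hmeas
    have hsub : ∀ i ∈ S', ∀ k : Fin n, k ∈ Blk i → k ∈ T := by
      intro i hi k hk
      exact Finset.mem_biUnion.mpr ⟨i, hi, hk⟩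
    -- restriction maps
    set ρ : ∀ i ∈ S', ({k // k ∈ T} → E) → ({k // k ∈ Blk i} → E) :=
      fun i hi w k => w ⟨k.1, hsub i hi k.1 k.2⟩ with hρ
    have hρmeas : ∀ i (hi : i ∈ S'), Measurable (ρ i hi) := by
      intro i hi
      exact measurable_pi_lambda _ (fun k => measurable_pi_apply _)
    have hAi : ∀ i (hi : i ∈ S'),
        A i = (fun ω (k : {k // k ∈ T}) => x k ω) ⁻¹' (ρ i hi ⁻¹' C i) := by
      intro i hi
      rw [hA i]
      rfl
    have hInter : ⋂ i ∈ S', A i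
        = (fun ω (k : {k // k ∈ T}) => x k ω) ⁻¹'
          (⋂ i, ⋂ hi : i ∈ S', ρ i hi ⁻¹' C i) := by
      rw [Set.preimage_iInter]
      apply Set.iInter_congr
      intro i
      rw [Set.preimage_iInter]
      apply Set.iInter_congr
      intro hi
      exact hAi i hi
    have hmeasInter : MeasurableSet (⋂ i, ⋂ hi : i ∈ S', ρ i hi ⁻¹' C i) :=
      MeasurableSet.iInter fun i => MeasurableSet.iInter fun hi => (hρmeas i hi) (hC i)
    rw [Finset.cons_eq_insert, Finset.set_biInter_insert, Finset.prod_insert ha]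
    rw [hA a, hInter]
    rw [hIF.measure_inter_preimage_eq_mul _ _ (hC a) hmeasInter]
    rw [← hInter, ← hA a, ih]

end moment

-- numeric helper: choose ≤ 2^b
lemma choose_le_two_pow' (b q : ℕ) : Nat.choose b q ≤ 2 ^ b := by
  rcases le_or_gt q b with h | h
  · calc Nat.choose b q ≤ ∑ m ∈ Finset.range (b+1), Nat.choose b m :=
        Finset.single_le_sum (fun _ _ => Nat.zero_le _) (Finset.mem_range.mpr (by omega))
      _ = 2 ^ b := Nat.sum_range_choose b
  · rw [Nat.choose_eq_zero_of_lt h]; exact Nat.zero_le _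

lemma numeric_bound (δ : ℝ) (hδ0 : 0 < δ) (hδ1 : δ < 1) (b : ℕ)
    (hb : b = 1 + ⌊3.5 * Real.log (1 / δ)⌋₊) :
    (Nat.choose b (b/4+1) : ℝ) * (1/1296 : ℝ) ^ (b/4+1) ≤ δ := by
  set L := Real.log (1/δ) with hL
  have hL0 : 0 < L := Real.log_pos (by rw [one_div]; exact (one_lt_inv₀ hδ0).mpr hδ1)
  have hbL : (L : ℝ) ≤ b := by
    have h1 : (3.5 * L : ℝ) < ⌊3.5 * L⌋₊ + 1 := Nat.lt_floor_add_one _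
    have : (b : ℝ) = 1 + ⌊3.5 * L⌋₊ := by rw [hb]; push_cast; ring
    nlinarith
  set q := b/4+1 with hq
  have h4q : b ≤ 4 * q := by
    have := Nat.div_add_mod b 4
    omega
  have h1 : ((1:ℝ)/1296) ^ q = ((1:ℝ)/6) ^ (4*q) := by
    rw [pow_mul]; norm_num
  have h2 : ((1:ℝ)/6) ^ (4*q) ≤ ((1:ℝ)/6) ^ b :=
    pow_le_pow_of_le_one (by norm_num) (by norm_num) h4q
  have h3 : (Nat.choose b q : ℝ) ≤ (2:ℝ) ^ b := by
    exact_mod_cast choose_le_two_pow' b q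
  have h4 : (Nat.choose b q : ℝ) * (1/1296 : ℝ) ^ q ≤ (2:ℝ)^b * ((1:ℝ)/6)^b := by
    rw [h1]
    apply mul_le_mul h3 h2 (by positivity) (by positivity)
  have h5 : (2:ℝ)^b * ((1:ℝ)/6)^b = ((1:ℝ)/3)^b := by
    rw [← mul_pow]; norm_num
  have h6 : ((1:ℝ)/3)^b ≤ Real.exp (-1) ^ b := by
    apply pow_le_pow_left₀ (by norm_num)
    rw [Real.exp_neg, one_div]
    exact inv_anti₀ (Real.exp_pos 1) (le_trans Real.exp_one_lt_d9.le (by norm_num))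
  have h7 : Real.exp (-1) ^ b = Real.exp (-(b:ℝ)) := by
    rw [← Real.exp_nat_mul]; ring_nf
  have h8 : Real.exp (-(b:ℝ)) ≤ Real.exp (-L) := Real.exp_le_exp.mpr (by linarith)
  have h9 : Real.exp (-L) = δ := by
    rw [hL, one_div, Real.log_inv, neg_neg, Real.exp_log hδ0]
  calc (Nat.choose b q : ℝ) * (1/1296 : ℝ) ^ q ≤ ((1:ℝ)/3)^b := by rw [← h5]; exact h4
    _ ≤ Real.exp (-1) ^ b := h6
    _ = Real.exp (-(b:ℝ)) := h7
    _ ≤ Real.exp (-L) := h8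
    _ = δ := h9

/-- Geometric median-of-means (Minsker 2015, Theorem 1): there is a universal constant `C` such
that for i.i.d. vectors with mean `μ` and covariance `Σ`, `δ ∈ (0,1)`,
`b = 1 + ⌊3.5 log(1/δ)⌋ ≤ n` blocks of size `⌊n/b⌋`, the geometric median of the block sample
means is within `C sqrt(trace(Σ)(1 + log(1/δ))/n)` of `μ` with probability at least `1 − δ`. -/
theorem stmt13 :
    ∃ C : ℝ, 0 < C ∧
      ∀ {Ω : Type} [MeasurableSpace Ω] (P : Measure Ω), IsProbabilityMeasure P →
      ∀ (d n : ℕ) (x : Fin n → Ω → EuclideanSpace ℝ (Fin d)),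
        (∀ i, Measurable (x i)) →
        iIndepFun x P →
      ∀ (ν : Measure (EuclideanSpace ℝ (Fin d))), (∀ i, Measure.map (x i) P = ν) →
      ∀ (μ : EuclideanSpace ℝ (Fin d)), (∀ i, Integrable (x i) P) →
        (∀ i, ∫ ω, x i ω ∂P = μ) →
      ∀ (Sig : Matrix (Fin d) (Fin d) ℝ),
        (∀ i, Integrable (fun ω => ‖x i ω - μ‖ ^ 2) P) →
        (∀ i, ∫ ω, ‖x i ω - μ‖ ^ 2 ∂P = Sig.trace) →
      ∀ δ : ℝ, 0 < δ → δ < 1 →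
      ∀ b : ℕ, b = 1 + ⌊3.5 * Real.log (1 / δ)⌋₊ → b ≤ n →
      -- the i-th block sample mean (block size `m = n / b`)
      ∀ blockMean : Fin b → Ω → EuclideanSpace ℝ (Fin d),
        (∀ i ω, blockMean i ω =
          ((n / b : ℕ) : ℝ)⁻¹ •
            ∑ k ∈ Finset.univ.filter (fun k : Fin n => k.val / (n / b) = i.val), x k ω) →
      -- `gmom ω` is a geometric median of the block means
      ∀ gmom : Ω → EuclideanSpace ℝ (Fin d),
        (∀ ω ν', ∑ i, ‖gmom ω - blockMean i ω‖ ≤ ∑ i, ‖ν' - blockMean i ω‖) →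
        ENNReal.ofReal (1 - δ) ≤
          P {ω | ‖gmom ω - μ‖ ≤
            C * Real.sqrt (Sig.trace * (1 + Real.log (1 / δ)) / n)} := by
  refine ⟨432, by norm_num, ?_⟩
  intro Ω mΩ P hP d n x hxmeas hindep ν hν μ hint hmean Sig hsq hvar δ hδ0 hδ1 b hb hbn
    blockMean hbm gmom hgmomHyp
  haveI := hP
  set L := Real.log (1 / δ) with hLdef
  have hL0 : 0 < L := Real.log_pos (by rw [one_div]; exact (one_lt_inv₀ hδ0).mpr hδ1)
  have hb0 : 0 < b := by omega
  have hb1 : 1 ≤ b := hb0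
  have hn0 : 0 < n := lt_of_lt_of_le hb0 hbn
  set t := Sig.trace with htdef
  -- block size
  obtain ⟨m, hmdef⟩ : ∃ m, m = n / b := ⟨n / b, rfl⟩
  rw [← hmdef] at hbm
  have hm : 0 < m := by rw [hmdef]; exact (Nat.one_le_div_iff hb0).mpr hbn
  have hmne : ((m : ℕ) : ℝ) ≠ 0 := by positivity
  have hbmn : b * m ≤ n := by
    rw [hmdef, mul_comm]; exact Nat.div_mul_le_self n b
  have ht0 : 0 ≤ t := by
    rw [← hvar ⟨0, hn0⟩]
    exact integral_nonneg fun ω => sq_nonneg _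
  have ht0' : 0 ≤ Sig.trace := ht0
  -- blocks
  obtain ⟨Blk, hBlk⟩ : ∃ Blk : Fin b → Finset (Fin n),
      Blk = fun i => Finset.univ.filter (fun k : Fin n => k.val / m = i.val) := ⟨_, rfl⟩
  have hbm' : ∀ i ω, blockMean i ω = ((m : ℕ) : ℝ)⁻¹ • ∑ k ∈ Blk i, x k ω := by
    intro i ω; rw [hBlk]; exact hbm i ω
  have hcard : ∀ i : Fin b, (Blk i).card = m := by
    intro i; rw [hBlk]; exact blk_card n m b i.val hm i.isLt hbmn
  have hdisj : ∀ i j : Fin b, i ≠ j → Disjoint (Blk i) (Blk j) := by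
    intro i j hij
    rw [hBlk, Finset.disjoint_left]
    intro k hk1 hk2
    simp only [Finset.mem_filter] at hk1 hk2
    exact hij (Fin.ext (by omega))
  -- case t = 0
  by_cases htz : t = 0
  · have hae : ∀ᵐ ω ∂P, ∀ k, x k ω = μ := by
      rw [ae_all_iff]
      intro k
      have h0 : ∫ ω, ‖x k ω - μ‖ ^ 2 ∂P = 0 := by rw [hvar k]; exact htz
      have h1 : (fun ω => ‖x k ω - μ‖ ^ 2) =ᵐ[P] 0 :=
        (integral_eq_zero_iff_of_nonneg (fun ω => sq_nonneg _) (hsq k)).mp h0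
      filter_upwards [h1] with ω hω
      have h2 : ‖x k ω - μ‖ ^ 2 = 0 := hω
      have h3 : ‖x k ω - μ‖ = 0 := by
        nlinarith [norm_nonneg (x k ω - μ)]
      rw [norm_eq_zero, sub_eq_zero] at h3
      exact h3
    have hQmeas : MeasurableSet {ω | ∀ k, x k ω = μ} := by
      have : {ω | ∀ k, x k ω = μ} = ⋂ k, (x k) ⁻¹' {μ} := by
        ext ω; simp [Set.mem_iInter]
      rw [this]
      exact MeasurableSet.iInter fun k => (hxmeas k) (measurableSet_singleton μ)
    have hQ1 : P {ω | ∀ k, x k ω = μ} = 1 := by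
      rw [← prob_compl_eq_zero_iff hQmeas]
      exact ae_iff.mp hae
    have hsubQ : {ω | ∀ k, x k ω = μ} ⊆
        {ω | ‖gmom ω - μ‖ ≤ 432 * Real.sqrt (t * (1 + L) / n)} := by
      intro ω hω
      simp only [Set.mem_setOf_eq] at hω ⊢
      have hbmμ : ∀ i, blockMean i ω = μ := by
        intro i
        rw [hbm' i ω]
        rw [Finset.sum_congr rfl (fun k _ => hω k), Finset.sum_const, hcard i]
        rw [← Nat.cast_smul_eq_nsmul ℝ, smul_smul, inv_mul_cancel₀ hmne, one_smul]
      have hmed := hgmomHyp ω μ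
      have hle : ∑ i : Fin b, ‖gmom ω - blockMean i ω‖ ≤ 0 := by
        calc ∑ i : Fin b, ‖gmom ω - blockMean i ω‖ ≤ ∑ i : Fin b, ‖μ - blockMean i ω‖ := hmed
          _ = 0 := by
            apply Finset.sum_eq_zero
            intro i _
            rw [hbmμ i, sub_self, norm_zero]
      have hzero : ‖gmom ω - blockMean ⟨0, hb0⟩ ω‖ ≤ 0 := by
        refine le_trans ?_ hle
        exact Finset.single_le_sum (f := fun i : Fin b => ‖gmom ω - blockMean i ω‖)
          (fun i _ => norm_nonneg _) (Finset.mem_univ _)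
      rw [hbmμ ⟨0, hb0⟩] at hzero
      have : ‖gmom ω - μ‖ = 0 := le_antisymm hzero (norm_nonneg _)
      rw [this]
      positivity
    calc ENNReal.ofReal (1 - δ) ≤ 1 := ENNReal.ofReal_le_one.mpr (by linarith)
      _ = P {ω | ∀ k, x k ω = μ} := hQ1.symm
      _ ≤ _ := measure_mono hsubQ
  -- main case
  have ht : 0 < t := lt_of_le_of_ne ht0 (Ne.symm htz)
  set ε : ℝ := 1296 * (t / m) with hεdef
  have hε : 0 < ε := by
    have : (0:ℝ) < m := by exact_mod_cast hm
    positivity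
  set r : ℝ := Real.sqrt ε with hrdef
  -- block mean second moment
  have hbmZ : ∀ i ω, blockMean i ω - μ = ((m:ℕ):ℝ)⁻¹ • ∑ k ∈ Blk i, (x k ω - μ) := by
    intro i ω
    rw [hbm' i ω, Finset.sum_sub_distrib, Finset.sum_const, hcard i, smul_sub]
    rw [← Nat.cast_smul_eq_nsmul ℝ, smul_smul, inv_mul_cancel₀ hmne, one_smul]
  have hgVal : ∀ i : Fin b, Integrable (fun ω => ‖blockMean i ω - μ‖ ^ 2) P ∧
      ∫ ω, ‖blockMean i ω - μ‖ ^ 2 ∂P = t / m := by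
    intro i
    obtain ⟨hInt, hVal⟩ := sum_sq_moment x hxmeas hindep μ hint hmean t hsq
      (fun k => hvar k) (Blk i)
    have hrw : (fun ω => ‖blockMean i ω - μ‖ ^ 2)
        = fun ω => (((m:ℕ):ℝ)⁻¹) ^ 2 * ‖∑ k ∈ Blk i, (x k ω - μ)‖ ^ 2 := by
      funext ω
      rw [hbmZ i ω, norm_smul, mul_pow]
      congr 1
      rw [Real.norm_eq_abs, sq_abs]
    constructor
    · rw [hrw]; exact hInt.const_mul _
    · rw [hrw, integral_const_mul, hVal, hcard i]
      field_simp
  -- the failure events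
  set A : Fin b → Set Ω := fun i => {ω | r < ‖blockMean i ω - μ‖} with hAdef
  set C : ∀ i : Fin b, Set ({k // k ∈ Blk i} → EuclideanSpace ℝ (Fin d)) :=
    fun i => {v | r < ‖((m:ℕ):ℝ)⁻¹ • (∑ k, v k) - μ‖} with hCdef
  have hCmeas : ∀ i, MeasurableSet (C i) := by
    intro i
    have hcont : Continuous fun v : {k // k ∈ Blk i} → EuclideanSpace ℝ (Fin d) =>
        ‖((m:ℕ):ℝ)⁻¹ • (∑ k, v k) - μ‖ := by
      apply Continuous.norm
      apply Continuous.sub _ continuous_const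
      exact ((continuous_finset_sum _ fun k _ => continuous_apply k).fun_const_smul _)
    exact measurableSet_lt measurable_const hcont.measurable
  have hArep : ∀ i, A i = (fun ω (k : {k // k ∈ Blk i}) => x k ω) ⁻¹' C i := by
    intro i
    ext ω
    simp only [hAdef, hCdef, Set.mem_preimage, Set.mem_setOf_eq]
    rw [hbm' i ω, Finset.sum_coe_sort (Blk i) (fun k => x k ω)]
  have hAmeas : ∀ i, MeasurableSet (A i) := by
    intro i
    rw [hArep i]
    have hX : Measurable (fun ω (k : {k // k ∈ Blk i}) => x k ω) :=
      measurable_pi_lambda _ fun k => hxmeas k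
    exact hX (hCmeas i)
  -- Chebyshev per block
  have hPA : ∀ i, P (A i) ≤ ENNReal.ofReal (1/1296) := by
    intro i
    obtain ⟨hInt, hVal⟩ := hgVal i
    have hsubset : A i ⊆ {ω | ε ≤ ‖blockMean i ω - μ‖ ^ 2} := by
      intro ω hω
      simp only [hAdef, Set.mem_setOf_eq] at hω ⊢
      have h1 : r ^ 2 < ‖blockMean i ω - μ‖ ^ 2 :=
        pow_lt_pow_left₀ hω (Real.sqrt_nonneg _) (by norm_num)
      rw [hrdef, Real.sq_sqrt hε.le] at h1
      exact h1.le
    have markov := mul_meas_ge_le_integral_of_nonneg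
      (Filter.Eventually.of_forall fun ω => sq_nonneg (‖blockMean i ω - μ‖)) hInt ε
    rw [hVal] at markov
    have htoReal : (P {ω | ε ≤ ‖blockMean i ω - μ‖ ^ 2}).toReal ≤ 1/1296 := by
      have h2 : t / m = ε * (1/1296) := by rw [hεdef]; ring
      rw [h2] at markov
      exact le_of_mul_le_mul_left markov hε
    calc P (A i) ≤ P {ω | ε ≤ ‖blockMean i ω - μ‖ ^ 2} := measure_mono hsubset
      _ = ENNReal.ofReal ((P {ω | ε ≤ ‖blockMean i ω - μ‖ ^ 2}).toReal) :=
          (ENNReal.ofReal_toReal (measure_ne_top P _)).symm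
      _ ≤ ENNReal.ofReal (1/1296) := ENNReal.ofReal_le_ofReal htoReal
  -- independence product
  have hprod := indep_blocks_inter x hxmeas hindep Blk hdisj C hCmeas A hArep
  -- bad event
  set q : ℕ := b / 4 + 1 with hqdef
  set bad : Set Ω := ⋃ S ∈ Finset.powersetCard q (Finset.univ : Finset (Fin b)),
    ⋂ i ∈ S, A i with hbaddef
  have hbadmeas : MeasurableSet bad := by
    apply Finset.measurableSet_biUnion
    intro S _
    exact Finset.measurableSet_biInter _ fun i _ => hAmeas i
  have hbadP : P bad ≤ ENNReal.ofReal δ := by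
    have h0 : P bad ≤ ∑ S ∈ Finset.powersetCard q (Finset.univ : Finset (Fin b)),
        P (⋂ i ∈ S, A i) := by
      rw [hbaddef]; exact measure_biUnion_finset_le _ _
    calc P bad ≤ ∑ S ∈ Finset.powersetCard q (Finset.univ : Finset (Fin b)), P (⋂ i ∈ S, A i) :=
          h0
      _ ≤ ∑ _S ∈ Finset.powersetCard q (Finset.univ : Finset (Fin b)),
            ENNReal.ofReal (1/1296) ^ q := by
          apply Finset.sum_le_sum
          intro S hS
          rw [hprod S]
          rw [Finset.mem_powersetCard] at hS
          calc ∏ i ∈ S, P (A i) ≤ ∏ _i ∈ S, ENNReal.ofReal (1/1296) :=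
                Finset.prod_le_prod' (fun i _ => hPA i)
            _ = ENNReal.ofReal (1/1296) ^ q := by rw [Finset.prod_const, hS.2]
      _ = (Nat.choose b q : ENNReal) * ENNReal.ofReal (1/1296) ^ q := by
          rw [Finset.sum_const, Finset.card_powersetCard, Finset.card_univ,
            Fintype.card_fin, nsmul_eq_mul]
      _ = ENNReal.ofReal ((Nat.choose b q : ℝ) * (1/1296:ℝ) ^ q) := by
          rw [ENNReal.ofReal_mul (by positivity), ← ENNReal.ofReal_pow (by norm_num),
            ENNReal.ofReal_natCast]
      _ ≤ ENNReal.ofReal δ := ENNReal.ofReal_le_ofReal (numeric_bound δ hδ0 hδ1 b hb)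
  -- good event implies the bound
  have hn2bm : (n : ℝ) ≤ 2 * b * m := by
    have h1 : m * b + n % b = n := by
      rw [hmdef]; exact Nat.div_add_mod' n b
    have h2 : n % b < b := Nat.mod_lt n hb0
    have h3 : b ≤ b * m := Nat.le_mul_of_pos_right b hm
    have h4 : m * b = b * m := Nat.mul_comm m b
    have h5 : n ≤ 2 * (b * m) := by omega
    have h6 : (n:ℝ) ≤ 2 * ((b:ℝ) * m) := by exact_mod_cast h5
    linarith
  have h2b : (2 * b : ℝ) ≤ 9 * (1 + L) := by
    have h1 : (⌊3.5 * L⌋₊ : ℝ) ≤ 3.5 * L := Nat.floor_le (by positivity)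
    have h2 : (b : ℝ) = 1 + (⌊3.5 * L⌋₊ : ℝ) := by rw [hb]; push_cast; ring
    nlinarith
  have hradius : 4 * r ≤ 432 * Real.sqrt (t * (1 + L) / n) := by
    have hmpos : (0:ℝ) < m := by exact_mod_cast hm
    have hnpos : (0:ℝ) < n := by exact_mod_cast hn0
    have h3 : t / m ≤ 9 * (t * (1 + L)) / n := by
      rw [div_le_div_iff₀ hmpos hnpos]
      calc t * n ≤ t * (2 * b * m) := mul_le_mul_of_nonneg_left hn2bm ht.le
        _ = (2 * b) * (t * m) := by ring
        _ ≤ (9 * (1 + L)) * (t * m) := mul_le_mul_of_nonneg_right h2b (by positivity)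
        _ = 9 * (t * (1 + L)) * m := by ring
    have h4 : 4 * r = Real.sqrt (20736 * (t / m)) := by
      rw [hrdef, hεdef]
      rw [show (20736:ℝ) * (t/m) = 4^2 * (1296 * (t/m)) by ring]
      rw [Real.sqrt_mul (by norm_num : (0:ℝ) ≤ 4^2), Real.sqrt_sq (by norm_num : (0:ℝ) ≤ 4)]
    have h5 : (432:ℝ) * Real.sqrt (t * (1 + L) / n) = Real.sqrt (186624 * (t * (1 + L) / n)) := by
      rw [show (186624:ℝ) * (t*(1+L)/n) = 432^2 * (t*(1+L)/n) by ring]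
      rw [Real.sqrt_mul (by norm_num : (0:ℝ) ≤ 432^2), Real.sqrt_sq (by norm_num : (0:ℝ) ≤ 432)]
    rw [h4, h5]
    apply Real.sqrt_le_sqrt
    calc 20736 * (t/m) ≤ 20736 * (9 * (t * (1+L)) / n) := by
          apply mul_le_mul_of_nonneg_left h3 (by norm_num)
      _ = 186624 * (t * (1+L) / n) := by ring
  have hcompl : badᶜ ⊆ {ω | ‖gmom ω - μ‖ ≤ 432 * Real.sqrt (t * (1 + L) / n)} := by
    intro ω hω
    simp only [Set.mem_setOf_eq]
    have hFc : 4 * (Finset.univ.filter fun i : Fin b => r < ‖blockMean i ω - μ‖).card ≤ b := by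
      by_contra hcon
      push_neg at hcon
      set Fs := Finset.univ.filter fun i : Fin b => r < ‖blockMean i ω - μ‖ with hFsdef
      have hqF : q ≤ Fs.card := by omega
      obtain ⟨S, hSsub, hScard⟩ := Finset.exists_subset_card_eq hqF
      apply hω
      simp only [hbaddef, Set.mem_iUnion]
      refine ⟨S, Finset.mem_powersetCard.mpr ⟨Finset.subset_univ S, hScard⟩, ?_⟩
      apply Set.mem_biInter
      intro i hi
      have := hSsub hi
      rw [hFsdef, Finset.mem_filter] at this
      exact this.2
    have hgm := gm_lemma hb0 (fun i => blockMean i ω) (gmom ω) μ r (Real.sqrt_nonneg _)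
      (hgmomHyp ω μ) hFc
    exact le_trans hgm (by linarith)
  have h2' : P badᶜ = 1 - P bad := prob_compl_eq_one_sub hbadmeas
  have h3' : ENNReal.ofReal (1 - δ) ≤ 1 - P bad := by
    calc ENNReal.ofReal (1 - δ) ≤ 1 - ENNReal.ofReal δ := by
          apply ENNReal.le_sub_of_add_le_right (by simp)
          rw [← ENNReal.ofReal_add (by linarith) hδ0.le]
          have hone : 1 - δ + δ = 1 := by ring
          rw [hone, ENNReal.ofReal_one]
      _ ≤ 1 - P bad := tsub_le_tsub_left hbadP 1
  rw [← h2'] at h3'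
  exact le_trans h3' (measure_mono hcompl)
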